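/- Let H be a finite group, p a prime, and Q_1, Q_2 Sylow p-subgroups of H such that D = Q_1 ∩ Q_2 is a tame intersection, i.e. N_{Q_1}(D) and N_{Q_2}(D) are Sylow p-subgroups of N_H(D). Then every normal p-subgroup of N_H(D) is contained in D; consequently, since D itself is a normal p-subgroup of N_H(D), D is the largest normal p-subgroup of N_H(D) (i.e. D is a radical p-subgroup of H). -/

import Mathlib

/-- `P` (a subgroup of `H`) is a Sylow `p`-subgroup of the subgroup `X` of `H`. -/
def IsSylowIn (p : ℕ) {H : Type*} [Group H] (P X : Subgroup H) : Prop :=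
  ∃ S : Sylow p ↥X, (S : Subgroup ↥X) = P.subgroupOf X

/-- A normal p-subgroup is contained in every Sylow p-subgroup. -/
lemma normal_pgroup_le_sylow {p : ℕ} [Fact p.Prime] {G : Type*} [Group G]
    {S : Subgroup G} (hS : S.Normal) (hSp : IsPGroup p S) (T : Sylow p G) :
    S ≤ (T : Subgroup G) := by
  have := hS
  have h : IsPGroup p ↥(S ⊔ (T : Subgroup G)) := hSp.to_sup_of_normal_left T.2
  have := T.3 h le_sup_right
  exact le_trans le_sup_left this.le

/-- if `D = Q₁ ⊓ Q₂` is a tame intersection of Sylow `p`-subgroups, then every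
normal `p`-subgroup of `N_H(D)` is contained in `D`; since `D` is itself a normal `p`-subgroup
of `N_H(D)`, it is the largest such, i.e. `D` is a radical `p`-subgroup of `H`. -/
theorem tame_intersection_is_radical
    (p : ℕ) [Fact p.Prime] (H : Type*) [Group H] [Finite H]
    (Q₁ Q₂ : Sylow p H) (D : Subgroup H)
    (hD : D = (Q₁ : Subgroup H) ⊓ (Q₂ : Subgroup H))
    (h₁ : IsSylowIn p ((Q₁ : Subgroup H) ⊓ (Subgroup.normalizer (D : Set H))) (Subgroup.normalizer (D : Set H)))
    (h₂ : IsSylowIn p ((Q₂ : Subgroup H) ⊓ (Subgroup.normalizer (D : Set H))) (Subgroup.normalizer (D : Set H))) :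
    (∀ S : Subgroup ↥(Subgroup.normalizer (D : Set H)), S.Normal → IsPGroup p S →
        S ≤ D.subgroupOf (Subgroup.normalizer (D : Set H))) ∧
      (D.subgroupOf (Subgroup.normalizer (D : Set H))).Normal ∧ IsPGroup p (D.subgroupOf (Subgroup.normalizer (D : Set H))) := by
  refine ⟨?_, Subgroup.normal_in_normalizer, ?_⟩
  · intro S hSn hSp
    obtain ⟨T₁, hT₁⟩ := h₁
    obtain ⟨T₂, hT₂⟩ := h₂
    have hle₁ : S ≤ (T₁ : Subgroup ↥(Subgroup.normalizer (D : Set H))) := normal_pgroup_le_sylow hSn hSp T₁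
    have hle₂ : S ≤ (T₂ : Subgroup ↥(Subgroup.normalizer (D : Set H))) := normal_pgroup_le_sylow hSn hSp T₂
    rw [hT₁] at hle₁
    rw [hT₂] at hle₂
    intro x hx
    have m1 := hle₁ hx
    have m2 := hle₂ hx
    rw [Subgroup.mem_subgroupOf] at m1 m2 ⊢
    have hm : (↑x : H) ∈ (Q₁ : Subgroup H) ⊓ (Q₂ : Subgroup H) := ⟨m1.1, m2.1⟩
    rwa [← hD] at hm
  · have hDp : IsPGroup p D := by
      rw [hD]; exact Q₁.2.to_inf_left
    exact hDp.comap_subtype
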